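/- Let G be a finite connected network with distinct positive edge-lengths, T its minimum spanning tree, and T' any spanning tree. Then len(T') - len(T) ≥ Σ_{e ∈ T' \ T} exc(e), where exc(e) = len(e) - perc(e) and perc(e) = perc(v,w) for e = (v,w). -/

import Mathlib

open SimpleGraph Finset

/-- The subgraph of `G` consisting of edges of length `< t`. -/
def Gt {V : Type*} (G : SimpleGraph V) (len : Sym2 V → ℝ) (t : ℝ) : SimpleGraph V where
  Adj v w := G.Adj v w ∧ len s(v, w) < t
  symm := ⟨fun v w h => ⟨h.1.symm, by rw [Sym2.eq_swap]; exact h.2⟩⟩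
  loopless := ⟨fun v h => G.loopless.irrefl v h.1⟩

/-- `perc(v,w)`: the infimum of `t` such that `v` and `w` lie in the same component of `G_t`. -/
noncomputable def perc {V : Type*} (G : SimpleGraph V) (len : Sym2 V → ℝ) (v w : V) : ℝ :=
  sInf {t | (Gt G len t).Reachable v w}

/-- `T` (a finite set of edges) is a spanning tree of `G`. -/
def IsST {V : Type*} (G : SimpleGraph V) (T : Finset (Sym2 V)) : Prop :=
  ↑T ⊆ G.edgeSet ∧ (SimpleGraph.fromEdgeSet (↑T : Set (Sym2 V))).IsTree

/-- Total length of a set of edges. -/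
noncomputable def lenSum {V : Type*} (len : Sym2 V → ℝ) (T : Finset (Sym2 V)) : ℝ :=
  ∑ e ∈ T, len e

/-- `T` is a minimum spanning tree of `G`. -/
def IsMST {V : Type*} (G : SimpleGraph V) (len : Sym2 V → ℝ) (T : Finset (Sym2 V)) : Prop :=
  IsST G T ∧ ∀ T', IsST G T' → lenSum len T ≤ lenSum len T'

/-- `percE e`: `perc(v,w)` for an edge `e = (v,w)`. -/
noncomputable def percE {V : Type*} (G : SimpleGraph V) (len : Sym2 V → ℝ) (e : Sym2 V) : ℝ :=
  sInf {t | ∃ v w, e = s(v, w) ∧ (Gt G len t).Reachable v w}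

section Helpers

variable {V : Type*}

lemma sym2_rep (e : Sym2 V) : ∃ v w, e = s(v, w) := by
  induction e using Sym2.ind with
  | _ a b => exact ⟨a, b, rfl⟩

lemma exists_crossing {H : SimpleGraph V} {S : Set V} :
    ∀ {v w : V} (p : H.Walk v w), v ∈ S → w ∉ S →
    ∃ (x y : V) (hxy : H.Adj x y) (p₁ : H.Walk v x) (p₂ : H.Walk y w),
      x ∈ S ∧ y ∉ S ∧ p = p₁.append (SimpleGraph.Walk.cons hxy p₂) := by
  intro v w p
  induction p with
  | nil => intro hv hw; exact absurd hv hw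
  | @cons v z w h q ih =>
    intro hv hw
    by_cases hz : z ∈ S
    · obtain ⟨x, y, hxy, p₁, p₂, hx, hy, heq⟩ := ih hz hw
      exact ⟨x, y, hxy, SimpleGraph.Walk.cons h p₁, p₂, hx, hy, by
        rw [heq]; simp [SimpleGraph.Walk.cons_append]⟩
    · exact ⟨v, z, h, SimpleGraph.Walk.nil, q, hv, hz, by simp⟩

lemma reach_trichotomy {H K : SimpleGraph V} {e₀ : Sym2 V} {v w : V}
    (he : e₀ = s(v, w)) (hK : ∀ a b : V, H.Adj a b → s(a, b) ≠ e₀ → K.Adj a b) :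
    ∀ {x y : V}, H.Walk x y →
      K.Reachable x y ∨ (K.Reachable x v ∧ K.Reachable w y) ∨
        (K.Reachable x w ∧ K.Reachable v y) := by
  intro x y p
  induction p with
  | nil => exact Or.inl (Reachable.refl _)
  | @cons x z y h q ih =>
    by_cases hez : s(x, z) = e₀
    · rw [he, Sym2.eq_iff] at hez
      rcases hez with ⟨rfl, rfl⟩ | ⟨rfl, rfl⟩
      · rcases ih with h1 | ⟨h2a, h2b⟩ | ⟨_, h3b⟩
        · exact Or.inr (Or.inl ⟨Reachable.refl _, h1⟩)
        · exact Or.inr (Or.inl ⟨Reachable.refl _, h2b⟩)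
        · exact Or.inl h3b
      · rcases ih with h1 | ⟨_, h2b⟩ | ⟨h3a, h3b⟩
        · exact Or.inr (Or.inr ⟨Reachable.refl _, h1⟩)
        · exact Or.inl h2b
        · exact Or.inr (Or.inr ⟨Reachable.refl _, h3b⟩)
    · have hxz : K.Reachable x z := (hK _ _ h hez).reachable
      rcases ih with h1 | ⟨h2a, h2b⟩ | ⟨h3a, h3b⟩
      · exact Or.inl (hxz.trans h1)
      · exact Or.inr (Or.inl ⟨hxz.trans h2a, h2b⟩)
      · exact Or.inr (Or.inr ⟨hxz.trans h3a, h3b⟩)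

lemma fes_edgeSet (S : Finset (Sym2 V)) (h : ∀ e ∈ S, ¬ e.IsDiag) :
    (fromEdgeSet (↑S : Set (Sym2 V))).edgeSet = ↑S := by
  rw [edgeSet_fromEdgeSet]
  ext e
  simp only [Set.mem_diff, Finset.mem_coe, Set.mem_setOf_eq, and_iff_left_iff_imp]
  exact fun he => h e he

lemma card_of_tree [Fintype V] (S : Finset (Sym2 V)) (h : ∀ e ∈ S, ¬ e.IsDiag)
    (ht : (fromEdgeSet (↑S : Set (Sym2 V))).IsTree) : S.card + 1 = Fintype.card V := by
  classical
  have hE := fes_edgeSet S h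
  haveI : Fintype ((fromEdgeSet (↑S : Set (Sym2 V))).edgeSet) := by
    rw [hE]; exact FinsetCoe.fintype S
  have hcard := ht.card_edgeFinset
  have : (fromEdgeSet (↑S : Set (Sym2 V))).edgeFinset = S := by
    apply Finset.coe_injective
    rw [coe_edgeFinset, hE]
  rwa [this] at hcard

lemma erase_le_sdiff {S : Finset (Sym2 V)} [DecidableEq V] {f : Sym2 V} :
    fromEdgeSet (↑(S.erase f) : Set (Sym2 V)) ≤
      fromEdgeSet (↑S : Set (Sym2 V)) \ fromEdgeSet {f} := by
  intro a b hab
  rw [fromEdgeSet_adj] at hab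
  rw [sdiff_adj, fromEdgeSet_adj, fromEdgeSet_adj]
  obtain ⟨hm, hne⟩ := hab
  rw [Finset.coe_erase, Set.mem_diff] at hm
  exact ⟨⟨hm.1, hne⟩, fun hc => hm.2 hc.1⟩

lemma tree_bridge [DecidableEq V] {S : Finset (Sym2 V)} (hnd : ∀ e ∈ S, ¬ e.IsDiag)
    (ht : (fromEdgeSet (↑S : Set (Sym2 V))).IsTree)
    {f : Sym2 V} (hf : f ∈ S) {x y : V} (hfxy : f = s(x, y)) :
    ¬ (fromEdgeSet (↑(S.erase f) : Set (Sym2 V))).Reachable x y := by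
  intro hr
  have hb := isAcyclic_iff_forall_edge_isBridge.1 ht.IsAcyclic
    (e := f) (by rw [fes_edgeSet S hnd]; exact hf)
  rw [hfxy, isBridge_iff] at hb
  exact hb (hr.mono (by rw [← hfxy]; exact erase_le_sdiff))

lemma swapST [DecidableEq V] {G : SimpleGraph V} {Tt : Finset (Sym2 V)} (hTt : IsST G Tt)
    {f : Sym2 V} (hf : f ∈ Tt) {x y v' w' : V} (hfxy : f = s(x, y))
    {e' : Sym2 V} (he' : e' = s(v', w')) (he'G : e' ∈ G.edgeSet) (he'Tt : e' ∉ Tt)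
    (hxv : (fromEdgeSet (↑(Tt.erase f) : Set (Sym2 V))).Reachable x v')
    (hyw : (fromEdgeSet (↑(Tt.erase f) : Set (Sym2 V))).Reachable y w') :
    IsST G (insert e' (Tt.erase f)) := by
  have hnd : ∀ a ∈ Tt, ¬ a.IsDiag := fun a ha => G.not_isDiag_of_mem_edgeSet (hTt.1 ha)
  have hvw' : v' ≠ w' := by
    intro hc
    exact G.not_isDiag_of_mem_edgeSet he'G (by rw [he', hc]; exact Sym2.mk_isDiag_iff.2 rfl)
  set K := fromEdgeSet (↑(insert e' (Tt.erase f)) : Set (Sym2 V)) with hK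
  have hle : fromEdgeSet (↑(Tt.erase f) : Set (Sym2 V)) ≤ K := by
    apply fromEdgeSet_mono
    intro a ha
    simp only [Finset.coe_insert, Set.mem_insert_iff]
    exact Or.inr ha
  have hadjK : K.Adj v' w' := by
    rw [hK, fromEdgeSet_adj]
    exact ⟨by simp [he'], hvw'⟩
  have hxyK : K.Reachable x y :=
    ((hxv.mono hle).trans hadjK.reachable).trans (hyw.mono hle).symm
  have hsub : ↑(insert e' (Tt.erase f)) ⊆ G.edgeSet := by
    intro a ha
    simp only [Finset.coe_insert, Set.mem_insert_iff, Finset.mem_coe] at ha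
    rcases ha with rfl | ha
    · exact he'G
    · exact hTt.1 (Finset.erase_subset _ _ ha)
  refine ⟨hsub, ?_, ?_⟩
  · have hne : Nonempty V := hTt.2.isConnected.nonempty
    refine Connected.mk ?_
    intro c d
    obtain ⟨p⟩ := hTt.2.isConnected.preconnected c d
    have htr := reach_trichotomy (K := fromEdgeSet (↑(Tt.erase f) : Set (Sym2 V)))
      hfxy (fun a b hab hne' => by
        rw [fromEdgeSet_adj] at hab ⊢
        rw [Finset.coe_erase, Set.mem_diff]
        exact ⟨⟨hab.1, hne'⟩, hab.2⟩) p
    rcases htr with h1 | ⟨h2a, h2b⟩ | ⟨h3a, h3b⟩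
    · exact h1.mono hle
    · exact ((h2a.mono hle).trans hxyK).trans (h2b.mono hle)
    · exact ((h3a.mono hle).trans hxyK.symm).trans (h3b.mono hle)
  · intro u c hc
    by_cases hec : e' ∈ c.edges
    · have hcy : K.Adj v' w' ∧ (K \ fromEdgeSet {e'}).Reachable v' w' := by
        rw [he']
        exact (adj_and_reachable_delete_edges_iff_exists_cycle (G := K) (v := v') (w := w')).2
          ⟨u, c, hc, by rw [← he']; exact hec⟩
      have hr : (fromEdgeSet (↑(Tt.erase f) : Set (Sym2 V))).Reachable v' w' := by
        refine (hcy.2.mono ?_)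
        intro a b hab
        rw [sdiff_adj, hK, fromEdgeSet_adj] at hab
        rw [fromEdgeSet_adj] at hab ⊢
        obtain ⟨⟨hm, hne'⟩, hnm⟩ := hab
        simp only [Finset.coe_insert, Set.mem_insert_iff, Finset.mem_coe] at hm
        rcases hm with rfl | hm
        · exact absurd ⟨rfl, hne'⟩ hnm
        · exact ⟨hm, hne'⟩
      exact tree_bridge hnd hTt.2 hf hfxy ((hxv.trans hr).trans hyw.symm)
    · have hce : ∀ a ∈ c.edges, a ∈ (fromEdgeSet (↑Tt : Set (Sym2 V))).edgeSet := by
        intro a ha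
        have h2 := c.edges_subset_edgeSet ha
        rw [edgeSet_fromEdgeSet] at h2
        rw [edgeSet_fromEdgeSet]
        obtain ⟨hm, hd⟩ := h2
        simp only [Finset.coe_insert, Set.mem_insert_iff, Finset.mem_coe] at hm
        rcases hm with rfl | hm
        · exact absurd ha hec
        · exact ⟨Finset.erase_subset _ _ hm, hd⟩
      exact hTt.2.IsAcyclic (c.transfer _ hce) (hc.transfer hce)

end Helpers

/-- If `T` is the MST and `T'` any spanning tree of a finite connected network with
distinct positive edge-lengths, then
`len(T') - len(T) ≥ ∑_{e ∈ T' \ T} exc(e)` where `exc(e) = len(e) - perc(e)`. -/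
theorem lenSum_sub_ge_sum_exc {V : Type*} [Fintype V] [Nonempty V] [DecidableEq V]
    (G : SimpleGraph V) (hG : G.Connected) (len : Sym2 V → ℝ)
    (hpos : ∀ e ∈ G.edgeSet, 0 < len e) (hdist : Set.InjOn len G.edgeSet)
    (T T' : Finset (Sym2 V)) (hT : IsMST G len T) (hT' : IsST G T') :
    lenSum len T' - lenSum len T ≥ ∑ e ∈ T' \ T, (len e - percE G len e) := by
  classical
  obtain ⟨⟨hTsub, hTtree⟩, hTmin⟩ := hT
  have hndT : ∀ a ∈ T, ¬ a.IsDiag := fun a ha => G.not_isDiag_of_mem_edgeSet (hTsub ha)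
  suffices H : ∀ (n : ℕ) (T'' : Finset (Sym2 V)), IsST G T'' → (T'' \ T).card = n →
      lenSum len T'' - lenSum len T ≥ ∑ e ∈ T'' \ T, (len e - percE G len e) from
    H _ T' hT' rfl
  intro n
  induction n with
  | zero =>
    intro T'' hST hcard
    have hempty : T'' \ T = ∅ := Finset.card_eq_zero.1 hcard
    have hsub : T'' ⊆ T := by
      intro a ha
      by_contra hc
      exact absurd (Finset.mem_sdiff.2 ⟨ha, hc⟩) (by rw [hempty]; simp)
    have hnd'' : ∀ a ∈ T'', ¬ a.IsDiag := fun a ha => G.not_isDiag_of_mem_edgeSet (hST.1 ha)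
    have hc1 := card_of_tree T hndT hTtree
    have hc2 := card_of_tree T'' hnd'' hST.2
    have heqT : T'' = T := Finset.eq_of_subset_of_card_le hsub (by omega)
    subst heqT
    rw [hempty]
    simp
  | succ n ih =>
    intro T'' hST hcard
    have hnd'' : ∀ a ∈ T'', ¬ a.IsDiag := fun a ha => G.not_isDiag_of_mem_edgeSet (hST.1 ha)
    -- pick e ∈ T \ T''
    have hTne : (T \ T'').Nonempty := by
      rw [Finset.sdiff_nonempty]
      intro hsub
      have hc1 := card_of_tree T hndT hTtree
      have hc2 := card_of_tree T'' hnd'' hST.2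
      have heqT : T = T'' := Finset.eq_of_subset_of_card_le hsub (by omega)
      rw [← heqT] at hcard
      simp at hcard
    obtain ⟨e, he⟩ := hTne
    rw [Finset.mem_sdiff] at he
    obtain ⟨heT, heT''⟩ := he
    obtain ⟨v, w, hevw⟩ := sym2_rep e
    have heG : e ∈ G.edgeSet := hTsub heT
    have hbridge : ¬ (fromEdgeSet (↑(T.erase e) : Set (Sym2 V))).Reachable v w :=
      tree_bridge hndT hTtree heT hevw
    -- cut property
    have hcut : ∀ a b : V, G.Adj a b →
        (fromEdgeSet (↑(T.erase e) : Set (Sym2 V))).Reachable v a →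
        ¬ (fromEdgeSet (↑(T.erase e) : Set (Sym2 V))).Reachable v b →
        len e ≤ len s(a, b) := by
      intro a b hab hra hrb
      by_cases hge : s(a, b) = e
      · rw [hge]
      · have hgT : s(a, b) ∉ T := by
          intro hmem
          apply hrb
          refine hra.trans (Adj.reachable ?_)
          rw [fromEdgeSet_adj]
          exact ⟨by rw [Finset.coe_erase, Set.mem_diff]; exact ⟨hmem, hge⟩, hab.ne⟩
        have hwb : (fromEdgeSet (↑(T.erase e) : Set (Sym2 V))).Reachable w b := by
          obtain ⟨p⟩ := hTtree.isConnected.preconnected w b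
          have htr := reach_trichotomy (K := fromEdgeSet (↑(T.erase e) : Set (Sym2 V)))
            hevw (fun a' b' hab' hne' => by
              rw [fromEdgeSet_adj] at hab' ⊢
              rw [Finset.coe_erase, Set.mem_diff]
              exact ⟨⟨hab'.1, hne'⟩, hab'.2⟩) p
          rcases htr with h1 | ⟨h2a, _⟩ | ⟨_, h3b⟩
          · exact h1
          · exact absurd h2a.symm hbridge
          · exact absurd h3b hrb
        have hswap := swapST ⟨hTsub, hTtree⟩ heT hevw rfl (G.mem_edgeSet.2 hab) hgT hra hwb
        have hmin := hTmin _ hswap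
        have hnotin : s(a, b) ∉ T.erase e := fun hc => hgT (Finset.erase_subset _ _ hc)
        have hsum : lenSum len (insert s(a, b) (T.erase e)) =
            len s(a, b) + (lenSum len T - len e) := by
          rw [lenSum, Finset.sum_insert hnotin, Finset.sum_erase_eq_sub heT]; rfl
        rw [hsum] at hmin
        linarith [hmin]
    -- find the crossing edge f on the T''-path from v to w
    have hvw : (fromEdgeSet (↑T'' : Set (Sym2 V))).Reachable v w :=
      hST.2.isConnected.preconnected v w
    obtain ⟨p0⟩ := hvw
    have hpath := p0.toPath.2
    obtain ⟨x, y, hxy, p₁, p₂, hx, hy, heq⟩ := exists_crossing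
      (S := {z | (fromEdgeSet (↑(T.erase e) : Set (Sym2 V))).Reachable v z})
      p0.toPath.1 (Reachable.refl v) hbridge
    have hfT'' : s(x, y) ∈ T'' := by
      exact ((fromEdgeSet_adj _).1 hxy).1
    have hxyne : x ≠ y := hxy.ne
    have hfG : s(x, y) ∈ G.edgeSet := hST.1 hfT''
    have hfT : s(x, y) ∉ T := by
      intro hmem
      apply hy
      refine hx.trans (Adj.reachable ?_)
      rw [fromEdgeSet_adj]
      refine ⟨by rw [Finset.coe_erase, Set.mem_diff]
                 exact ⟨hmem, fun hc => heT'' (hc ▸ hfT'')⟩, hxyne⟩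
    -- f not among the edges of p₁, p₂
    have hnodup : (p₁.append (SimpleGraph.Walk.cons hxy p₂)).edges.Nodup := by
      rw [← heq]; exact hpath.isTrail.edges_nodup
    rw [SimpleGraph.Walk.edges_append, SimpleGraph.Walk.edges_cons, List.nodup_append] at hnodup
    have hf1 : s(x, y) ∉ p₁.edges := fun hc => hnodup.2.2 _ hc _ List.mem_cons_self rfl
    have hf2 : s(x, y) ∉ p₂.edges := (List.nodup_cons.1 hnodup.2.1).1
    -- transfer the two path segments into T'' minus f
    have htrans : ∀ (u₁ u₂ : V) (q : (fromEdgeSet (↑T'' : Set (Sym2 V))).Walk u₁ u₂),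
        (∀ a ∈ q.edges, a ≠ s(x, y)) →
        (fromEdgeSet (↑(T''.erase s(x, y)) : Set (Sym2 V))).Reachable u₁ u₂ := by
      intro u₁ u₂ q hq
      refine ⟨q.transfer _ ?_⟩
      intro a ha
      have h2 := q.edges_subset_edgeSet ha
      rw [edgeSet_fromEdgeSet] at h2
      rw [edgeSet_fromEdgeSet]
      refine ⟨?_, h2.2⟩
      rw [Finset.coe_erase, Set.mem_diff]
      exact ⟨h2.1, hq a ha⟩
    have hxvr : (fromEdgeSet (↑(T''.erase s(x, y)) : Set (Sym2 V))).Reachable x v :=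
      (htrans v x p₁ (fun a ha hc => hf1 (hc ▸ ha))).symm
    have hywr : (fromEdgeSet (↑(T''.erase s(x, y)) : Set (Sym2 V))).Reachable y w :=
      htrans y w p₂ (fun a ha hc => hf2 (hc ▸ ha))
    have hswap := swapST hST hfT'' rfl hevw heG heT'' hxvr hywr
    -- perc bound for f
    have hperc : len e ≤ percE G len s(x, y) := by
      apply le_csInf
      · exact ⟨len s(x, y) + 1, x, y, rfl,
          Adj.reachable (show G.Adj x y ∧ len s(x, y) < len s(x, y) + 1 from ⟨G.mem_edgeSet.1 hfG, by linarith⟩)⟩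
      · rintro t ⟨v₁, w₁, hrep, hre⟩
        have hre' : (Gt G len t).Reachable x y := by
          rw [Sym2.eq_iff] at hrep
          rcases hrep with ⟨rfl, rfl⟩ | ⟨rfl, rfl⟩
          · exact hre
          · exact hre.symm
        obtain ⟨q⟩ := hre'
        obtain ⟨a, b, hadj, _, _, ha, hb, _⟩ := exists_crossing
          (S := {z | (fromEdgeSet (↑(T.erase e) : Set (Sym2 V))).Reachable v z}) q hx hy
        have := hcut a b (hadj : G.Adj a b ∧ len s(a, b) < t).1 ha hb
        linarith [(hadj : G.Adj a b ∧ len s(a, b) < t).2]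
    -- induction step arithmetic
    have hfdiff : s(x, y) ∈ T'' \ T := Finset.mem_sdiff.2 ⟨hfT'', hfT⟩
    have hT3 : (insert e (T''.erase s(x, y))) \ T = (T'' \ T).erase s(x, y) := by
      ext a
      simp only [Finset.mem_sdiff, Finset.mem_erase, Finset.mem_insert]
      constructor
      · rintro ⟨rfl | ⟨hne, haT''⟩, haT⟩
        · exact absurd heT haT
        · exact ⟨hne, haT'', haT⟩
      · rintro ⟨hne, haT'', haT⟩
        exact ⟨Or.inr ⟨hne, haT''⟩, haT⟩
    have hT3card : ((insert e (T''.erase s(x, y))) \ T).card = n := by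
      rw [hT3, Finset.card_erase_of_mem hfdiff, hcard]
      omega
    have hIH := ih _ hswap hT3card
    have henotin : e ∉ T''.erase s(x, y) := fun hc => heT'' (Finset.erase_subset _ _ hc)
    have hsum3 : lenSum len (insert e (T''.erase s(x, y))) =
        len e + (lenSum len T'' - len s(x, y)) := by
      rw [lenSum, Finset.sum_insert henotin, Finset.sum_erase_eq_sub hfT'']; rfl
    have hsplit : ∑ a ∈ (T'' \ T).erase s(x, y), (len a - percE G len a) +
        (len s(x, y) - percE G len s(x, y)) = ∑ a ∈ T'' \ T, (len a - percE G len a) :=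
      Finset.sum_erase_add _ _ hfdiff
    rw [hsum3, hT3] at hIH
    have : len s(x, y) - percE G len s(x, y) ≤ len s(x, y) - len e := by linarith
    linarith [hIH, hsplit]
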